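/- Let m ≥ 2 be an integer and θ ≥ 2/m a real number. Let C_{k,n} be the coefficients of the polynomials obtained by differentiating e^{λ x^m/m}. Then for all k ≥ 2 and 0 ≤ n ≤ ⌊k(m-1)/m⌋ - 1, C_{k,n+1} ≤ C_{k,n} · m · k^{mθ}. -/

import Mathlib

open Polynomial Finset

private lemma coeff_msum' (a : ℕ → ℂ) (e : ℕ → ℕ) (R d : ℕ) :
    (∑ n ∈ range R, Polynomial.C (a n) * X ^ (e n)).coeff d
      = ∑ n ∈ range R, if e n = d then a n else 0 := by
  rw [finset_sum_coeff]
  refine Finset.sum_congr rfl fun n _ => ?_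
  rw [coeff_C_mul, coeff_X_pow]
  by_cases h : e n = d
  · simp [h]
  · rw [if_neg h, if_neg (fun hh => h hh.symm), mul_zero]

private lemma CX_mul (a b : ℂ) (i j : ℕ) :
    Polynomial.C a * X ^ i * (Polynomial.C b * X ^ j)
      = Polynomial.C (a * b) * X ^ (j + i) := by
  rw [Polynomial.C_mul]; ring

private lemma deriv_CX (a : ℂ) (j : ℕ) :
    Polynomial.derivative (Polynomial.C a * X ^ j)
      = Polynomial.C (a * j) * X ^ (j - 1) := by
  simp [Polynomial.derivative_X_pow]; ring

theorem coefficient_recursive_bound (m : ℕ) (hm : 2 ≤ m) (lam : ℂ) (hlam : lam ≠ 0)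
    (p : ℕ → Polynomial ℂ) (hp0 : p 0 = 1)
    (hprec : ∀ k, p (k + 1) =
      Polynomial.C lam * Polynomial.X ^ (m - 1) * p k + Polynomial.derivative (p k))
    (C : ℕ → ℕ → ℕ)
    (hC : ∀ k : ℕ, 1 ≤ k →
      p k = ∑ n ∈ Finset.range (k * (m - 1) / m + 1),
        Polynomial.C (lam ^ (k - n) * (C k n : ℂ)) * Polynomial.X ^ ((m - 1) * k - n * m)) :
    ∀ θ : ℝ, 2 / (m : ℝ) ≤ θ →
      ∀ k : ℕ, 2 ≤ k → ∀ n : ℕ, n ≤ k * (m - 1) / m - 1 →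
        (C k (n + 1) : ℝ) ≤ (C k n : ℝ) * (m : ℝ) * (k : ℝ) ^ ((m : ℝ) * θ) := by
  have hmpos : 0 < m := by omega
  have hmem : ∀ k n : ℕ, n ≤ k * (m - 1) / m ↔ n * m ≤ k * (m - 1) :=
    fun k n => Nat.le_div_iff_mul_le hmpos
  have hNk : ∀ k : ℕ, k * (m - 1) / m ≤ k := by
    intro k
    have : k * (m - 1) ≤ k * m := Nat.mul_le_mul_left k (by omega)
    calc k * (m - 1) / m ≤ k * m / m := Nat.div_le_div_right this
      _ = k := Nat.mul_div_cancel k hmpos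
  have hNsucc : ∀ k : ℕ, (k + 1) * (m - 1) / m ≤ k * (m - 1) / m + 1 := by
    intro k
    have h1 : (k + 1) * (m - 1) ≤ k * (m - 1) + m := by
      have : (k + 1) * (m - 1) = k * (m - 1) + (m - 1) := by ring
      omega
    calc (k + 1) * (m - 1) / m ≤ (k * (m - 1) + m) / m := Nat.div_le_div_right h1
      _ = k * (m - 1) / m + 1 := Nat.add_div_right _ hmpos
  -- key recurrence
  have key : ∀ k : ℕ, 1 ≤ k → ∀ n₀ : ℕ, n₀ ≤ (k + 1) * (m - 1) / m →
      C (k + 1) n₀ = (if n₀ ≤ k * (m - 1) / m then C k n₀ else 0)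
        + (if 1 ≤ n₀ then ((m - 1) * k - (n₀ - 1) * m) * C k (n₀ - 1) else 0) := by
    intro k hk n₀ hn₀
    set d : ℕ := (m - 1) * (k + 1) - n₀ * m with hd
    have hc1 : (m - 1) * k = k * (m - 1) := Nat.mul_comm _ _
    have hc2 : (m - 1) * (k + 1) = (k + 1) * (m - 1) := Nat.mul_comm _ _
    have hexp : (k + 1) * (m - 1) = k * (m - 1) + (m - 1) := by ring
    have hn₀m : n₀ * m ≤ (k + 1) * (m - 1) := (hmem _ _).1 hn₀
    -- LHS coefficient
    have hL : (p (k + 1)).coeff d = lam ^ (k + 1 - n₀) * (C (k + 1) n₀ : ℂ) := by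
      rw [hC (k + 1) (by omega), coeff_msum']
      have step : ∀ n ∈ Finset.range ((k + 1) * (m - 1) / m + 1),
          (if (m - 1) * (k + 1) - n * m = d then lam ^ (k + 1 - n) * (C (k + 1) n : ℂ) else 0)
          = if n = n₀ then lam ^ (k + 1 - n₀) * (C (k + 1) n₀ : ℂ) else 0 := by
        intro n hn
        rw [Finset.mem_range] at hn
        have h1 : n * m ≤ (k + 1) * (m - 1) := (hmem _ _).1 (by omega)
        by_cases he : n = n₀
        · subst he; rw [if_pos (by omega), if_pos rfl]
        · have : ¬ ((m - 1) * (k + 1) - n * m = d) := by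
            intro hcond
            have : n * m = n₀ * m := by omega
            exact he (Nat.eq_of_mul_eq_mul_right hmpos this)
          rw [if_neg this, if_neg he]
      rw [Finset.sum_congr rfl step, Finset.sum_ite_eq' (Finset.range _) n₀]
      rw [if_pos (Finset.mem_range.2 (by omega))]
    -- RHS as explicit sums
    have hR : Polynomial.C lam * X ^ (m - 1) * p k + Polynomial.derivative (p k)
        = (∑ n ∈ Finset.range (k * (m - 1) / m + 1),
            Polynomial.C (lam ^ (k + 1 - n) * (C k n : ℂ)) * X ^ ((m - 1) * k - n * m + (m - 1)))
        + (∑ n ∈ Finset.range (k * (m - 1) / m + 1),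
            Polynomial.C (lam ^ (k - n) * (C k n : ℂ) * (((m - 1) * k - n * m : ℕ) : ℂ))
              * X ^ ((m - 1) * k - n * m - 1)) := by
      rw [hC k hk, Finset.mul_sum, Polynomial.derivative_sum]
      congr 1
      · refine Finset.sum_congr rfl fun n hn => ?_
        rw [Finset.mem_range] at hn
        have hnk : n ≤ k := le_trans (by omega) (hNk k)
        rw [CX_mul]
        congr 1
        rw [show k + 1 - n = (k - n) + 1 by omega, pow_succ]
        ring
      · refine Finset.sum_congr rfl fun n hn => ?_
        rw [deriv_CX]
    -- coefficient of first sum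
    have hS1 : (∑ n ∈ Finset.range (k * (m - 1) / m + 1),
            Polynomial.C (lam ^ (k + 1 - n) * (C k n : ℂ)) * X ^ ((m - 1) * k - n * m + (m - 1))).coeff d
        = if n₀ ≤ k * (m - 1) / m then lam ^ (k + 1 - n₀) * (C k n₀ : ℂ) else 0 := by
      rw [coeff_msum']
      have step : ∀ n ∈ Finset.range (k * (m - 1) / m + 1),
          (if (m - 1) * k - n * m + (m - 1) = d then lam ^ (k + 1 - n) * (C k n : ℂ) else 0)
          = if n = n₀ then (if n₀ ≤ k * (m - 1) / m then lam ^ (k + 1 - n₀) * (C k n₀ : ℂ) else 0)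
            else 0 := by
        intro n hn
        rw [Finset.mem_range] at hn
        have h1 : n * m ≤ k * (m - 1) := (hmem _ _).1 (by omega)
        by_cases he : n = n₀
        · subst he
          rw [if_pos (by omega), if_pos rfl, if_pos (by omega)]
        · have : ¬ ((m - 1) * k - n * m + (m - 1) = d) := by
            intro hcond
            have : n * m = n₀ * m := by omega
            exact he (Nat.eq_of_mul_eq_mul_right hmpos this)
          rw [if_neg this, if_neg he]
      rw [Finset.sum_congr rfl step, Finset.sum_ite_eq' (Finset.range _) n₀]
      by_cases hcase : n₀ ≤ k * (m - 1) / m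
      · rw [if_pos (Finset.mem_range.2 (by omega))]
      · rw [if_neg hcase, ite_self]
    -- coefficient of second sum
    have hS2 : (∑ n ∈ Finset.range (k * (m - 1) / m + 1),
            Polynomial.C (lam ^ (k - n) * (C k n : ℂ) * (((m - 1) * k - n * m : ℕ) : ℂ))
              * X ^ ((m - 1) * k - n * m - 1)).coeff d
        = if 1 ≤ n₀ then
            lam ^ (k + 1 - n₀) * (C k (n₀ - 1) : ℂ) * (((m - 1) * k - (n₀ - 1) * m : ℕ) : ℂ)
          else 0 := by
      rw [coeff_msum']
      have step : ∀ n ∈ Finset.range (k * (m - 1) / m + 1),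
          (if (m - 1) * k - n * m - 1 = d then
              lam ^ (k - n) * (C k n : ℂ) * (((m - 1) * k - n * m : ℕ) : ℂ) else 0)
          = if n = n₀ - 1 then (if 1 ≤ n₀ then
              lam ^ (k + 1 - n₀) * (C k (n₀ - 1) : ℂ) * (((m - 1) * k - (n₀ - 1) * m : ℕ) : ℂ)
            else 0) else 0 := by
        intro n hn
        rw [Finset.mem_range] at hn
        have h1 : n * m ≤ k * (m - 1) := (hmem _ _).1 (by omega)
        have hnm1 : (n + 1) * m = n * m + m := by ring
        have hnk : n ≤ k := le_trans (by omega) (hNk k)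
        by_cases hz : (m - 1) * k - n * m = 0
        · -- both sides vanish
          have hL0 : (if (m - 1) * k - n * m - 1 = d then
              lam ^ (k - n) * (C k n : ℂ) * (((m - 1) * k - n * m : ℕ) : ℂ) else 0) = 0 := by
            rw [hz]; simp
          rw [hL0]
          by_cases hn1 : n = n₀ - 1
          · by_cases h1n : 1 ≤ n₀
            · rw [if_pos hn1, if_pos h1n, show n₀ - 1 = n from hn1.symm, hz]
              simp
            · rw [if_pos hn1, if_neg h1n]
          · rw [if_neg hn1]
        · by_cases hcond : (m - 1) * k - n * m - 1 = d
          · have hn0 : n₀ = n + 1 := by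
              have : n₀ * m = (n + 1) * m := by omega
              exact Nat.eq_of_mul_eq_mul_right hmpos this
            subst hn0
            rw [if_pos hcond, if_pos (by omega), if_pos (by omega)]
            simp only [Nat.add_sub_cancel, Nat.succ_sub_succ, Nat.sub_zero]
          · rw [if_neg hcond]
            by_cases hn1 : n = n₀ - 1
            · by_cases h1n : 1 ≤ n₀
              · exfalso
                apply hcond
                have : n₀ = n + 1 := by omega
                subst this
                omega
              · rw [if_pos hn1, if_neg h1n]
            · rw [if_neg hn1]
      rw [Finset.sum_congr rfl step, Finset.sum_ite_eq' (Finset.range _) (n₀ - 1)]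
      by_cases h1n : 1 ≤ n₀
      · have : n₀ - 1 ≤ k * (m - 1) / m := by have := hNsucc k; omega
        rw [if_pos (Finset.mem_range.2 (by omega))]
      · rw [if_neg h1n, ite_self]
    have hsum : lam ^ (k + 1 - n₀) * (C (k + 1) n₀ : ℂ)
        = (if n₀ ≤ k * (m - 1) / m then lam ^ (k + 1 - n₀) * (C k n₀ : ℂ) else 0)
        + (if 1 ≤ n₀ then
            lam ^ (k + 1 - n₀) * (C k (n₀ - 1) : ℂ) * (((m - 1) * k - (n₀ - 1) * m : ℕ) : ℂ)
          else 0) := by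
      rw [← hL, hprec k, hR, Polynomial.coeff_add, hS1, hS2]
    have hcast : (C (k + 1) n₀ : ℂ)
        = (((if n₀ ≤ k * (m - 1) / m then C k n₀ else 0)
            + (if 1 ≤ n₀ then ((m - 1) * k - (n₀ - 1) * m) * C k (n₀ - 1) else 0) : ℕ) : ℂ) := by
      have hpow : lam ^ (k + 1 - n₀) ≠ 0 := pow_ne_zero _ hlam
      apply mul_left_cancel₀ hpow
      rw [hsum]
      push_cast [apply_ite (fun x : ℕ => (x : ℂ))]
      split_ifs <;> ring
    exact_mod_cast hcast
  -- natural number bound by induction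
  have bound : ∀ k : ℕ, 1 ≤ k → ∀ n : ℕ, n + 1 ≤ k * (m - 1) / m →
      C k (n + 1) ≤ m * k ^ 2 * C k n := by
    intro k hk
    induction k, hk using Nat.le_induction with
    | base =>
      intro n hn
      exfalso
      have : 1 * (m - 1) / m = 0 := by
        rw [one_mul]; exact Nat.div_eq_of_lt (by omega)
      omega
    | succ k hk ih =>
      intro n hn
      have h1 := key k hk (n + 1) hn
      have h2 := key k hk n (by omega)
      have hnNk : n ≤ k * (m - 1) / m := by have := hNsucc k; omega
      rw [if_pos hnNk] at h2
      have hge : C k n ≤ C (k + 1) n := by rw [h2]; exact Nat.le_add_right _ _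
      rw [if_pos (by omega : 1 ≤ n + 1)] at h1
      simp only [Nat.add_sub_cancel] at h1
      have hfirst : (if n + 1 ≤ k * (m - 1) / m then C k (n + 1) else 0)
          ≤ m * k ^ 2 * C k n := by
        split_ifs with h
        · exact ih n h
        · exact Nat.zero_le _
      have hE : (m - 1) * k - n * m ≤ m * k :=
        le_trans (Nat.sub_le _ _) (Nat.mul_le_mul_right k (by omega))
      have h3 : ((m - 1) * k - n * m) * C k n ≤ (m * k) * C k n :=
        Nat.mul_le_mul_right _ hE
      have h4 : C (k + 1) (n + 1) ≤ m * k ^ 2 * C k n + m * k * C k n := by omega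
      have h5 : m * k ^ 2 * C k n + m * k * C k n ≤ m * (k + 1) ^ 2 * C k n := by nlinarith
      calc C (k + 1) (n + 1) ≤ m * (k + 1) ^ 2 * C k n := le_trans h4 h5
        _ ≤ m * (k + 1) ^ 2 * C (k + 1) n := Nat.mul_le_mul_left _ hge
  -- final real-power step
  intro θ hθ k hk n hn
  have hNpos : 1 ≤ k * (m - 1) / m := by
    rw [hmem]
    have : m ≤ 2 * (m - 1) := by omega
    calc 1 * m = m := one_mul m
      _ ≤ 2 * (m - 1) := this
      _ ≤ k * (m - 1) := Nat.mul_le_mul_right _ hk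
  have hb := bound k (by omega) n (by omega)
  have hb' : (C k (n + 1) : ℝ) ≤ (m : ℝ) * (k : ℝ) ^ 2 * (C k n : ℝ) := by exact_mod_cast hb
  have hk1 : (1 : ℝ) ≤ (k : ℝ) := by exact_mod_cast (by omega : 1 ≤ k)
  have hmr : (0 : ℝ) < (m : ℝ) := by exact_mod_cast hmpos
  have hθ2 : (2 : ℝ) ≤ (m : ℝ) * θ := by
    have h := mul_le_mul_of_nonneg_left hθ hmr.le
    calc (2 : ℝ) = (m : ℝ) * (2 / (m : ℝ)) := by field_simp
      _ ≤ (m : ℝ) * θ := h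
  have hpow : (k : ℝ) ^ (2 : ℕ) ≤ (k : ℝ) ^ ((m : ℝ) * θ) := by
    rw [← Real.rpow_natCast (k : ℝ) 2]
    exact Real.rpow_le_rpow_of_exponent_le hk1 (by exact_mod_cast hθ2)
  have hcn : (0 : ℝ) ≤ (C k n : ℝ) := Nat.cast_nonneg _
  nlinarith [mul_le_mul_of_nonneg_left hpow (mul_nonneg hmr.le hcn)]
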